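/- An affine transformation A : F^d → F^d respects all three of congruence on simultaneity ≡_S, lightlike relatedness λ, and betweenness Bw if and only if A is a trivial Euclidean similarity. (That is, the affine automorphisms of Late Classical spacetime ⟨F^d, ≡_S, λ, Bw⟩ are exactly the trivial Euclidean similarities.) -/

import Mathlib

namespace Spacetimes

open Finset

variable {F : Type*} [Field F] [LinearOrder F] [IsStrictOrderedRing F] {d : ℕ}

/-- The Euclidean scalar product on `Fin d → F`. -/
def euclProd (p q : Fin d → F) : F := ∑ i, p i * q i

/-- The Minkowski product on `Fin d → F`; index `0` is the time coordinate. -/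
def minkProd [NeZero d] (p q : Fin d → F) : F :=
  p 0 * q 0 - ∑ i ∈ Finset.univ.erase (0 : Fin d), p i * q i

/-- The squared distance function associated to a product `B`. -/
def sqDist (B : (Fin d → F) → (Fin d → F) → F) (p q : Fin d → F) : F :=
  B (p - q) (p - q)

/-- An affine transformation: a linear bijection composed with a translation. -/
def IsAffine (A : (Fin d → F) → (Fin d → F)) : Prop :=
  ∃ (L : (Fin d → F) ≃ₗ[F] (Fin d → F)) (t : Fin d → F), ∀ p, A p = L p + t

/-- A Euclidean similarity: an affine transformation scaling squared
Euclidean distances by a constant factor. -/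
def EuclSim (A : (Fin d → F) → (Fin d → F)) : Prop :=
  IsAffine A ∧ ∃ a : F, ∀ p q : Fin d → F,
    sqDist euclProd (A p) (A q) = a * sqDist euclProd p q

/-- A Poincaré similarity: an affine transformation scaling squared
Minkowski distances by a constant factor. -/
def PoiSim [NeZero d] (A : (Fin d → F) → (Fin d → F)) : Prop :=
  IsAffine A ∧ ∃ a : F, ∀ p q : Fin d → F,
    sqDist minkProd (A p) (A q) = a * sqDist minkProd p q

/-- A Galilean similarity. -/
def GalSim [NeZero d] (A : (Fin d → F) → (Fin d → F)) : Prop :=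
  IsAffine A ∧ ∃ a : F, ∀ p q : Fin d → F, p 0 = q 0 →
    A p 0 = A q 0 ∧ sqDist euclProd (A p) (A q) = a * sqDist euclProd p q

/-- A map respects a binary relation. -/
def Respects2 {α : Type*} (f : α → α) (R : α → α → Prop) : Prop :=
  ∀ p q, R p q ↔ R (f p) (f q)

/-- A map respects a ternary relation. -/
def Respects3 {α : Type*} (f : α → α) (R : α → α → α → Prop) : Prop :=
  ∀ p q r, R p q r ↔ R (f p) (f q) (f r)

/-- A map respects a 4-ary relation. -/
def Respects4 {α : Type*} (f : α → α) (R : α → α → α → α → Prop) : Prop :=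
  ∀ p q r s, R p q r s ↔ R (f p) (f q) (f r) (f s)

/-- Absolute simultaneity. -/
def SimRel [NeZero d] (p q : Fin d → F) : Prop := p 0 = q 0

/-- Being at rest (same spatial components). -/
def RestRel [NeZero d] (p q : Fin d → F) : Prop := ∀ i, i ≠ 0 → p i = q i

/-- A trivial Euclidean similarity: a Euclidean similarity respecting `RestRel`. -/
def TrivEuclSim [NeZero d] (A : (Fin d → F) → (Fin d → F)) : Prop :=
  EuclSim A ∧ Respects2 A RestRel

/-- A trivial Galilean similarity: a Galilean similarity respecting `RestRel`. -/
def TrivGalSim [NeZero d] (A : (Fin d → F) → (Fin d → F)) : Prop :=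
  GalSim A ∧ Respects2 A RestRel

/-- Betweenness. -/
def Bw (p q r : Fin d → F) : Prop :=
  ∃ l : F, 0 ≤ l ∧ l ≤ 1 ∧ q = p + l • (r - p)

/-- Lightlike relatedness. -/
def Light [NeZero d] (p q : Fin d → F) : Prop :=
  (p 0 - q 0) ^ 2 = ∑ i ∈ Finset.univ.erase (0 : Fin d), (p i - q i) ^ 2

/-- Euclidean congruence of segments. -/
def CongE (p q r s : Fin d → F) : Prop :=
  sqDist euclProd p q = sqDist euclProd r s

/-- Minkowski congruence of segments. -/
def CongM [NeZero d] (p q r s : Fin d → F) : Prop :=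
  sqDist minkProd p q = sqDist minkProd r s

/-- Congruence on simultaneity. -/
def CongS [NeZero d] (p q r s : Fin d → F) : Prop :=
  CongE p q r s ∧ SimRel p q ∧ SimRel r s

/-- The time axis. -/
def timeAxis (F : Type*) [Field F] [LinearOrder F] [IsStrictOrderedRing F] (d : ℕ) [NeZero d] :
    Set (Fin d → F) := {p | ∀ i, i ≠ 0 → p i = 0}

/-- The simultaneity at the origin. -/
def simul0 (F : Type*) [Field F] [LinearOrder F] [IsStrictOrderedRing F] (d : ℕ) [NeZero d] :
    Set (Fin d → F) := {p | p 0 = 0}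

/-- The `i`-th standard unit vector. -/
def unitVec (F : Type*) [Field F] [LinearOrder F] [IsStrictOrderedRing F] {d : ℕ} (i : Fin d) : Fin d → F :=
  Pi.single i 1

lemma ep_comm (u v : Fin d → F) : euclProd u v = euclProd v u := by
  simp [euclProd, mul_comm]

lemma ep_add_left (u v w : Fin d → F) :
    euclProd (u + v) w = euclProd u w + euclProd v w := by
  simp [euclProd, add_mul, Finset.sum_add_distrib]

lemma ep_add_right (u v w : Fin d → F) :
    euclProd u (v + w) = euclProd u v + euclProd u w := by
  simp [euclProd, mul_add, Finset.sum_add_distrib]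

lemma ep_smul_left (c : F) (u v : Fin d → F) :
    euclProd (c • u) v = c * euclProd u v := by
  simp [euclProd, Finset.mul_sum, mul_assoc]

lemma ep_smul_right (c : F) (u v : Fin d → F) :
    euclProd u (c • v) = c * euclProd u v := by
  rw [ep_comm, ep_smul_left, ep_comm]

lemma ep_sum_left {s : Finset (Fin d)} (f : Fin d → (Fin d → F)) (w : Fin d → F) :
    euclProd (∑ i ∈ s, f i) w = ∑ i ∈ s, euclProd (f i) w := by
  classical
  induction s using Finset.induction with
  | empty => simp [euclProd]
  | insert a s h ih => rw [Finset.sum_insert h, ep_add_left, ih, Finset.sum_insert h]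

lemma ep_sum_right {s : Finset (Fin d)} (f : Fin d → (Fin d → F)) (w : Fin d → F) :
    euclProd w (∑ i ∈ s, f i) = ∑ i ∈ s, euclProd w (f i) := by
  rw [ep_comm, ep_sum_left]
  exact Finset.sum_congr rfl fun i _ => ep_comm _ _

lemma ep_single_left (i : Fin d) (x : F) (v : Fin d → F) :
    euclProd (Pi.single i x) v = x * v i := by
  simp [euclProd, Pi.single_apply, ite_mul]

lemma ep_unit_left (i : Fin d) (v : Fin d → F) :
    euclProd (unitVec F i) v = v i := by
  simp [unitVec, ep_single_left]

lemma Q_expand (u v : Fin d → F) :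
    euclProd (u + v) (u + v) = euclProd u u + 2 * euclProd u v + euclProd v v := by
  rw [ep_add_left, ep_add_right, ep_add_right, ep_comm v u]; ring

lemma Q_expand_sub (u v : Fin d → F) :
    euclProd (u - v) (u - v) = euclProd u u - 2 * euclProd u v + euclProd v v := by
  have : u - v = u + (-1 : F) • v := by funext i; simp; ring
  rw [this, Q_expand, ep_smul_right, ep_smul_left, ep_smul_right]; ring

lemma Q_zero {v : Fin d → F} (h : euclProd v v = 0) : v = 0 := by
  funext i
  have h2 := (Finset.sum_eq_zero_iff_of_nonneg
    (fun j _ => mul_self_nonneg (v j))).mp h i (Finset.mem_univ i)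
  simpa using mul_self_eq_zero.mp h2

lemma Q_split [NeZero d] (v : Fin d → F) :
    euclProd v v = v 0 ^ 2 + ∑ i ∈ Finset.univ.erase (0 : Fin d), v i ^ 2 := by
  rw [euclProd, ← Finset.add_sum_erase Finset.univ (fun i => v i * v i) (Finset.mem_univ 0)]
  simp [pow_two]

lemma spatial_decomp [NeZero d] {v : Fin d → F} (h : ∀ i, i ≠ 0 → v i = 0) :
    v = v 0 • unitVec F 0 := by
  funext i
  by_cases hi : i = 0
  · subst hi; simp [unitVec]
  · simp [unitVec, Pi.single_apply, hi, h i hi]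

lemma spatial_sum [NeZero d] {v : Fin d → F} (h : v 0 = 0) :
    v = ∑ i ∈ Finset.univ.erase (0 : Fin d), v i • unitVec F i := by
  funext j
  rw [Finset.sum_apply]
  by_cases hj : j = 0
  · subst hj
    rw [h]
    symm
    apply Finset.sum_eq_zero
    intro i hi
    have hne : i ≠ 0 := (Finset.mem_erase.mp hi).1
    simp [unitVec, Pi.single_apply, Ne.symm hne]
  · rw [Finset.sum_eq_single j]
    · simp [unitVec]
    · intro b _ hbj; simp [unitVec, Pi.single_apply, Ne.symm hbj]
    · intro hj2; exact absurd (Finset.mem_erase.mpr ⟨hj, Finset.mem_univ j⟩) hj2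

lemma unit_apply_ne [NeZero d] {i j : Fin d} (h : j ≠ i) : unitVec F i j = 0 := by
  simp [unitVec, Pi.single_apply, h]

lemma unit_apply_eq (i : Fin d) : unitVec F i i = 1 := by simp [unitVec]

lemma Q_unit (i : Fin d) : euclProd (unitVec F i) (unitVec F i) = 1 := by
  rw [ep_unit_left, unit_apply_eq]


lemma forward_key [NeZero d] (hd : 2 ≤ d) (L : (Fin d → F) ≃ₗ[F] (Fin d → F))
    (hC : ∀ v w : Fin d → F,
      (euclProd v v = euclProd w w ∧ v 0 = 0 ∧ w 0 = 0) ↔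
      (euclProd (L v) (L v) = euclProd (L w) (L w) ∧ L v 0 = 0 ∧ L w 0 = 0))
    (hL : ∀ v : Fin d → F, 2 * v 0 ^ 2 = euclProd v v ↔ 2 * L v 0 ^ 2 = euclProd (L v) (L v)) :
    ∃ c : F, c ≠ 0 ∧ L (unitVec F 0) = c • unitVec F 0 ∧
      ∀ v, euclProd (L v) (L v) = c ^ 2 * euclProd v v := by
  classical
  have hsim : ∀ v : Fin d → F, v 0 = 0 ↔ L v 0 = 0 := by
    intro v
    constructor
    · intro h; exact ((hC v v).mp ⟨rfl, h, h⟩).2.1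
    · intro h; exact ((hC v v).mpr ⟨rfl, h, h⟩).2.1
  have hcong : ∀ v w : Fin d → F, v 0 = 0 → w 0 = 0 →
      (euclProd v v = euclProd w w ↔ euclProd (L v) (L v) = euclProd (L w) (L w)) := by
    intro v w hv hw
    constructor
    · intro h; exact ((hC v w).mp ⟨h, hv, hw⟩).1
    · intro h; exact ((hC v w).mpr ⟨h, (hsim v).mp hv, (hsim w).mp hw⟩).1
  set j1 : Fin d := ⟨1, by omega⟩ with hj1def
  have hj1 : j1 ≠ 0 := by simp [Fin.ext_iff, hj1def]
  set a : F := euclProd (L (unitVec F j1)) (L (unitVec F j1)) with hadef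
  have hdiag : ∀ i : Fin d, i ≠ 0 → euclProd (L (unitVec F i)) (L (unitVec F i)) = a := by
    intro i hi
    rw [hadef]
    apply (hcong (unitVec F i) (unitVec F j1) (unit_apply_ne (Ne.symm hi))
      (unit_apply_ne (Ne.symm hj1))).mp
    rw [Q_unit, Q_unit]
  have ha0 : a ≠ 0 := by
    intro h
    have h2 : euclProd (L (unitVec F j1)) (L (unitVec F j1)) = 0 := by rw [← hadef, h]
    have h3 : (L (unitVec F j1) : Fin d → F) = 0 := Q_zero h2
    have h4 : unitVec F j1 = 0 := by
      apply L.injective; rw [h3, map_zero]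
    have h5 := congrFun h4 j1
    rw [unit_apply_eq] at h5
    simpa using h5
  have horth : ∀ i j : Fin d, i ≠ 0 → j ≠ 0 → i ≠ j →
      euclProd (L (unitVec F i)) (L (unitVec F j)) = 0 := by
    intro i j hi hj hij
    have hepij : euclProd (unitVec F i) (unitVec F j) = 0 := by
      rw [ep_unit_left]; exact unit_apply_ne hij
    have h0p : (unitVec F i + unitVec F j) 0 = 0 := by
      rw [Pi.add_apply, unit_apply_ne (Ne.symm hi), unit_apply_ne (Ne.symm hj), add_zero]
    have h0m : (unitVec F i - unitVec F j) 0 = 0 := by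
      rw [Pi.sub_apply, unit_apply_ne (Ne.symm hi), unit_apply_ne (Ne.symm hj), sub_zero]
    have heq : euclProd (unitVec F i + unitVec F j) (unitVec F i + unitVec F j)
        = euclProd (unitVec F i - unitVec F j) (unitVec F i - unitVec F j) := by
      rw [Q_expand, Q_expand_sub, hepij]; ring
    have h2 := (hcong _ _ h0p h0m).mp heq
    rw [map_add, map_sub, Q_expand, Q_expand_sub] at h2
    linarith
  have hspan : ∀ v w : Fin d → F, v 0 = 0 → w 0 = 0 →
      euclProd (L v) (L w) = a * euclProd v w := by
    intro v w hv hw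
    have hLv : (L v : Fin d → F) = ∑ i ∈ Finset.univ.erase (0 : Fin d), v i • L (unitVec F i) := by
      conv_lhs => rw [spatial_sum hv]
      rw [map_sum]
      exact Finset.sum_congr rfl fun i _ => map_smul L _ _
    have hLw : (L w : Fin d → F) = ∑ i ∈ Finset.univ.erase (0 : Fin d), w i • L (unitVec F i) := by
      conv_lhs => rw [spatial_sum hw]
      rw [map_sum]
      exact Finset.sum_congr rfl fun i _ => map_smul L _ _
    rw [hLv, hLw, ep_sum_left]
    have hterm : ∀ i ∈ Finset.univ.erase (0 : Fin d),
        euclProd (v i • L (unitVec F i))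
          (∑ j ∈ Finset.univ.erase (0 : Fin d), w j • L (unitVec F j)) = v i * w i * a := by
      intro i hi
      have hi0 : i ≠ 0 := (Finset.mem_erase.mp hi).1
      rw [ep_smul_left, ep_sum_right]
      rw [Finset.sum_eq_single i]
      · rw [ep_smul_right, hdiag i hi0]; ring
      · intro b hb hbi
        rw [ep_smul_right, horth i b hi0 (Finset.mem_erase.mp hb).1 (Ne.symm hbi)]
        ring
      · intro h; exact absurd hi h
    rw [Finset.sum_congr rfl hterm]
    have hvw : euclProd v w = ∑ i ∈ Finset.univ.erase (0 : Fin d), v i * w i := by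
      rw [euclProd, ← Finset.add_sum_erase Finset.univ (fun i => v i * w i) (Finset.mem_univ 0),
        hv]
      ring
    rw [hvw, Finset.mul_sum]
    exact Finset.sum_congr rfl fun i _ => by ring
  set w : Fin d → F := L (unitVec F 0) with hwdef
  have hLu0 : ∀ i : Fin d, i ≠ 0 → (L (unitVec F i)) 0 = 0 :=
    fun i hi => (hsim _).mp (unit_apply_ne (Ne.symm hi))
  have hlight : ∀ i : Fin d, i ≠ 0 →
      euclProd w (L (unitVec F i)) = 0 ∧ 2 * w 0 ^ 2 = euclProd w w + a := by
    intro i hi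
    have hlp : 2 * ((unitVec F 0 + unitVec F i : Fin d → F) 0) ^ 2
        = euclProd (unitVec F 0 + unitVec F i) (unitVec F 0 + unitVec F i) := by
      rw [Q_expand, Q_unit, Q_unit, ep_unit_left, unit_apply_ne (Ne.symm hi), Pi.add_apply,
        unit_apply_eq, unit_apply_ne (Ne.symm hi)]
      norm_num
    have hlm : 2 * ((unitVec F 0 - unitVec F i : Fin d → F) 0) ^ 2
        = euclProd (unitVec F 0 - unitVec F i) (unitVec F 0 - unitVec F i) := by
      rw [Q_expand_sub, Q_unit, Q_unit, ep_unit_left, unit_apply_ne (Ne.symm hi), Pi.sub_apply,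
        unit_apply_eq, unit_apply_ne (Ne.symm hi)]
      norm_num
    have h1 := (hL _).mp hlp
    have h2 := (hL _).mp hlm
    rw [map_add, Q_expand, Pi.add_apply, hLu0 i hi, add_zero, ← hwdef, hdiag i hi] at h1
    rw [map_sub, Q_expand_sub, Pi.sub_apply, hLu0 i hi, sub_zero, ← hwdef, hdiag i hi] at h2
    constructor
    · linarith
    · linarith
  have hworth : ∀ u : Fin d → F, u 0 = 0 → euclProd w (L u) = 0 := by
    intro u hu
    have hLu : (L u : Fin d → F) = ∑ i ∈ Finset.univ.erase (0 : Fin d), u i • L (unitVec F i) := by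
      conv_lhs => rw [spatial_sum hu]
      rw [map_sum]
      exact Finset.sum_congr rfl fun i _ => map_smul L _ _
    rw [hLu, ep_sum_right]
    apply Finset.sum_eq_zero
    intro i hi
    rw [ep_smul_right, (hlight i (Finset.mem_erase.mp hi).1).1]
    ring
  have hwspatial : w = w 0 • unitVec F 0 := by
    set ws : Fin d → F := w - w 0 • unitVec F 0 with hwsdef
    have hws0 : ws 0 = 0 := by
      simp [hwsdef, unit_apply_eq]
    have hLsymm : L (L.symm ws) = ws := L.apply_symm_apply ws
    have hsym0 : (L.symm ws : Fin d → F) 0 = 0 := by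
      apply (hsim (L.symm ws)).mpr
      rw [hLsymm]; exact hws0
    have hw_ws : euclProd w ws = 0 := by
      rw [← hLsymm]; exact hworth _ hsym0
    have hQws : euclProd ws ws = 0 := by
      have hw_eq : w = ws + w 0 • unitVec F 0 := by
        rw [hwsdef]; abel
      have hsplit : euclProd w ws = euclProd ws ws + w 0 * ws 0 := by
        conv_lhs => rw [hw_eq]
        rw [ep_add_left, ep_smul_left, ep_unit_left]
      rw [hw_ws, hws0] at hsplit
      linarith
    have hws_zero : ws = 0 := Q_zero hQws
    have : w - w 0 • unitVec F 0 = 0 := by rw [← hwsdef]; exact hws_zero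
    exact sub_eq_zero.mp this
  set c : F := w 0 with hcdef
  have hQw : euclProd w w = c ^ 2 := by
    rw [hwspatial, ep_smul_left, ep_smul_right, Q_unit]; ring
  have hc2 : c ^ 2 = a := by
    have h := (hlight j1 hj1).2
    rw [hQw] at h
    linarith
  have hc : c ≠ 0 := by
    intro h
    rw [h] at hc2
    simp at hc2
    exact ha0 hc2.symm
  refine ⟨c, hc, ?_, ?_⟩
  · exact hwspatial
  · intro v
    obtain ⟨vs, hvsdef⟩ : ∃ vs : Fin d → F, vs = v - v 0 • unitVec F 0 := ⟨_, rfl⟩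
    have hvs0 : vs 0 = 0 := by rw [hvsdef]; simp [unit_apply_eq]
    have hvdec : v = v 0 • unitVec F 0 + vs := by rw [hvsdef]; abel
    have hQLvs : euclProd (L vs) (L vs) = a * euclProd vs vs := hspan vs vs hvs0 hvs0
    have horthvs : euclProd w (L vs) = 0 := hworth vs hvs0
    have hLv : (L v : Fin d → F) = v 0 • w + L vs := by
      conv_lhs => rw [hvdec]
      rw [map_add, map_smul, ← hwdef]
    have lhs_eq : euclProd (L v) (L v)
        = v 0 ^ 2 * euclProd w w + 2 * v 0 * euclProd w (L vs) + euclProd (L vs) (L vs) := by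
      rw [hLv, Q_expand]
      simp only [ep_smul_left, ep_smul_right]
      ring
    have rhs_eq : euclProd v v = v 0 ^ 2 + euclProd vs vs := by
      conv_lhs => rw [hvdec]
      rw [Q_expand]
      simp only [ep_smul_left, ep_smul_right, ep_unit_left, unit_apply_eq, hvs0]
      ring
    rw [lhs_eq, rhs_eq, horthvs, hQLvs, hQw, ← hc2]
    ring


lemma light_iff [NeZero d] (p q : Fin d → F) :
    Light p q ↔ 2 * (p 0 - q 0) ^ 2 = euclProd (p - q) (p - q) := by
  unfold Light
  rw [Q_split (p - q)]
  simp only [Pi.sub_apply]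
  constructor <;> intro h <;> linarith

lemma lzero_of [NeZero d] (L : (Fin d → F) ≃ₗ[F] (Fin d → F)) {c : F} (hc : c ≠ 0)
    (hLe : L (unitVec F 0) = c • unitVec F 0)
    (hQ : ∀ v, euclProd (L v) (L v) = c ^ 2 * euclProd v v) :
    ∀ v, L v 0 = c * v 0 := by
  have hpol : ∀ v w : Fin d → F, euclProd (L v) (L w) = c ^ 2 * euclProd v w := by
    intro v w
    have h1 := hQ (v + w)
    rw [map_add, Q_expand, Q_expand] at h1
    linear_combination (h1 - hQ v - hQ w) / 2
  intro v
  have h := hpol (unitVec F 0) v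
  rw [hLe, ep_smul_left, ep_unit_left, ep_unit_left] at h
  -- h : c * L v 0 = c ^ 2 * v 0
  apply mul_left_cancel₀ hc
  rw [h]; ring

lemma bw_affine (A : (Fin d → F) → (Fin d → F))
    (L : (Fin d → F) ≃ₗ[F] (Fin d → F)) (t : Fin d → F) (hAeq : ∀ p, A p = L p + t) :
    Respects3 A Bw := by
  intro p q r
  constructor
  · rintro ⟨l, h0, h1, rfl⟩
    refine ⟨l, h0, h1, ?_⟩
    simp only [hAeq, map_add, map_smul, map_sub]
    funext i
    simp only [Pi.add_apply, Pi.smul_apply, Pi.sub_apply, smul_eq_mul]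
    ring
  · rintro ⟨l, h0, h1, heq⟩
    refine ⟨l, h0, h1, ?_⟩
    apply L.injective
    have h2 : L q + t = (L (p + l • (r - p))) + t := by
      rw [hAeq q] at heq
      rw [heq]
      simp only [hAeq, map_add, map_smul, map_sub]
      funext i
      simp only [Pi.add_apply, Pi.smul_apply, Pi.sub_apply, smul_eq_mul]
      ring
    exact add_right_cancel h2

lemma core_main [NeZero d] (A : (Fin d → F) → (Fin d → F))
    (L : (Fin d → F) ≃ₗ[F] (Fin d → F)) (t : Fin d → F) (hAeq : ∀ p, A p = L p + t)
    {c : F} (hc : c ≠ 0) (hLe : L (unitVec F 0) = c • unitVec F 0)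
    (hQ : ∀ v, euclProd (L v) (L v) = c ^ 2 * euclProd v v) :
    TrivEuclSim A := by
  have hdiff : ∀ p q : Fin d → F, A p - A q = L (p - q) := by
    intro p q
    rw [hAeq, hAeq, map_sub]
    abel
  constructor
  · refine ⟨⟨L, t, hAeq⟩, c ^ 2, fun p q => ?_⟩
    rw [sqDist, sqDist, hdiff]
    exact hQ _
  · intro p q
    have l0 := lzero_of L hc hLe hQ
    constructor
    · intro h i hi
      have hv : ∀ j, j ≠ 0 → (p - q) j = 0 := fun j hj => by
        rw [Pi.sub_apply, h j hj, sub_self]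
      have hdec : p - q = (p - q) 0 • unitVec F 0 := spatial_decomp hv
      have h2 : A p - A q = ((p - q) 0 * c) • unitVec F 0 := by
        rw [hdiff]
        conv_lhs => rw [hdec]
        rw [map_smul, hLe, smul_smul]
      have h3 := congrFun h2 i
      rw [Pi.sub_apply, Pi.smul_apply, unit_apply_ne hi] at h3
      simp only [smul_eq_mul, mul_zero] at h3
      exact sub_eq_zero.mp h3
    · intro h i hi
      have hv : ∀ j, j ≠ 0 → L (p - q) j = 0 := by
        intro j hj
        have h2 := congrFun (hdiff p q) j
        rw [Pi.sub_apply, h j hj, sub_self] at h2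
        exact h2.symm
      have hdec : (L (p - q) : Fin d → F) = L (p - q) 0 • unitVec F 0 := spatial_decomp hv
      have h2 : L ((p - q) 0 • unitVec F 0) = L (p - q) := by
        rw [map_smul, hLe, smul_smul, mul_comm, ← l0 (p - q), ← hdec]
      have h3 := congrFun (L.injective h2) i
      rw [Pi.smul_apply, unit_apply_ne hi, smul_eq_mul, mul_zero, Pi.sub_apply] at h3
      exact sub_eq_zero.mp h3.symm

lemma core_respects [NeZero d] (A : (Fin d → F) → (Fin d → F))
    (L : (Fin d → F) ≃ₗ[F] (Fin d → F)) (t : Fin d → F) (hAeq : ∀ p, A p = L p + t)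
    {c : F} (hc : c ≠ 0) (hLe : L (unitVec F 0) = c • unitVec F 0)
    (hQ : ∀ v, euclProd (L v) (L v) = c ^ 2 * euclProd v v) :
    Respects4 A CongS ∧ Respects2 A Light ∧ Respects3 A Bw := by
  have hc2 : (c : F) ^ 2 ≠ 0 := pow_ne_zero _ hc
  have hdiff : ∀ p q : Fin d → F, A p - A q = L (p - q) := by
    intro p q
    rw [hAeq, hAeq, map_sub]
    abel
  have l0 := lzero_of L hc hLe hQ
  have hA0 : ∀ p q : Fin d → F, A p 0 - A q 0 = c * (p 0 - q 0) := by
    intro p q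
    have h1 := congrFun (hdiff p q) 0
    rw [Pi.sub_apply] at h1
    rw [h1, l0 (p - q), Pi.sub_apply]
  have hsim' : ∀ p q : Fin d → F, (A p 0 = A q 0) ↔ (p 0 = q 0) := by
    intro p q
    rw [← sub_eq_zero, hA0, mul_eq_zero, or_iff_right hc, sub_eq_zero]
  have hsq : ∀ p q : Fin d → F,
      sqDist euclProd (A p) (A q) = c ^ 2 * sqDist euclProd p q := by
    intro p q
    rw [sqDist, sqDist, hdiff]
    exact hQ _
  refine ⟨?_, ?_, bw_affine A L t hAeq⟩
  · intro p q r s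
    unfold CongS CongE SimRel
    rw [hsq p q, hsq r s, mul_right_inj' hc2, hsim' p q, hsim' r s]
  · intro p q
    rw [light_iff, light_iff]
    have h2 : A p 0 - A q 0 = c * (p 0 - q 0) := hA0 p q
    rw [h2, hdiff, hQ]
    constructor
    · intro h; rw [← h]; ring
    · intro h
      apply mul_left_cancel₀ hc2
      linear_combination h

/-- the affine automorphisms of Late Classical spacetime
`⟨F^d, ≡_S, λ, Bw⟩` are exactly the trivial Euclidean similarities. -/
theorem affAut_lclass_eq_trivEuclSim [NeZero d] (hd : 2 ≤ d)
    (A : (Fin d → F) → (Fin d → F)) (hA : IsAffine A) :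
    (Respects4 A CongS ∧ Respects2 A Light ∧ Respects3 A Bw) ↔
      TrivEuclSim A := by
  obtain ⟨L, t, hAeq⟩ := hA
  have hdiff : ∀ p q : Fin d → F, A p - A q = L (p - q) := by
    intro p q
    rw [hAeq, hAeq, map_sub]
    abel
  have key0 : ∀ v : Fin d → F, A v 0 - A 0 0 = L v 0 := by
    intro v
    have h := congrFun (hdiff v 0) 0
    rw [Pi.sub_apply, sub_zero] at h
    exact h
  have keyQ : ∀ v : Fin d → F, sqDist euclProd (A v) (A 0) = euclProd (L v) (L v) := by
    intro v
    rw [sqDist, hdiff, sub_zero]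
  constructor
  · rintro ⟨hCS, hLi, -⟩
    have hC : ∀ v w : Fin d → F,
        (euclProd v v = euclProd w w ∧ v 0 = 0 ∧ w 0 = 0) ↔
        (euclProd (L v) (L v) = euclProd (L w) (L w) ∧ L v 0 = 0 ∧ L w 0 = 0) := by
      intro v w
      have h := hCS v 0 w 0
      unfold CongS CongE SimRel at h
      rw [show sqDist euclProd v 0 = euclProd v v from by rw [sqDist, sub_zero],
        show sqDist euclProd w 0 = euclProd w w from by rw [sqDist, sub_zero],
        keyQ v, keyQ w] at h
      rw [show ((v 0 = (0 : Fin d → F) 0)) ↔ v 0 = 0 from by rw [Pi.zero_apply],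
        show ((w 0 = (0 : Fin d → F) 0)) ↔ w 0 = 0 from by rw [Pi.zero_apply],
        show (A v 0 = A 0 0) ↔ L v 0 = 0 from by rw [← sub_eq_zero, key0 v],
        show (A w 0 = A 0 0) ↔ L w 0 = 0 from by rw [← sub_eq_zero, key0 w]] at h
      exact h
    have hL : ∀ v : Fin d → F,
        2 * v 0 ^ 2 = euclProd v v ↔ 2 * L v 0 ^ 2 = euclProd (L v) (L v) := by
      intro v
      have h := hLi v 0
      rw [light_iff, light_iff] at h
      rw [show A v 0 - A 0 0 = L v 0 from key0 v, hdiff] at h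
      simp only [sub_zero, Pi.zero_apply] at h
      exact h
    obtain ⟨c, hc, hLe, hQ⟩ := forward_key hd L hC hL
    exact core_main A L t hAeq hc hLe hQ
  · rintro ⟨⟨-, a, hsq⟩, hrest⟩
    have hQa : ∀ v : Fin d → F, euclProd (L v) (L v) = a * euclProd v v := by
      intro v
      have h := hsq v 0
      rw [keyQ v, sqDist, sub_zero] at h
      exact h
    have hr0 : RestRel (unitVec F (0 : Fin d)) (0 : Fin d → F) := by
      intro i hi
      rw [unit_apply_ne hi, Pi.zero_apply]
    have hrA := (hrest (unitVec F 0) 0).mp hr0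
    have hLes : ∀ i : Fin d, i ≠ 0 → L (unitVec F (0 : Fin d)) i = 0 := by
      intro i hi
      have h := congrFun (hdiff (unitVec F 0) 0) i
      rw [Pi.sub_apply, hrA i hi, sub_self, sub_zero] at h
      exact h.symm
    have hLe : L (unitVec F (0 : Fin d)) = (L (unitVec F (0 : Fin d)) 0) • unitVec F 0 :=
      spatial_decomp hLes
    set c : F := L (unitVec F (0 : Fin d)) 0 with hcdef
    have hc : c ≠ 0 := by
      intro h
      rw [h, zero_smul] at hLe
      have h2 : unitVec F (0 : Fin d) = 0 := by
        apply L.injective; rw [hLe, map_zero]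
      have h3 := congrFun h2 0
      rw [unit_apply_eq] at h3
      simpa using h3
    have ha : a = c ^ 2 := by
      have h1 := hQa (unitVec F 0)
      rw [hLe, ep_smul_left, ep_smul_right, Q_unit] at h1
      linear_combination -h1
    have hQ : ∀ v : Fin d → F, euclProd (L v) (L v) = c ^ 2 * euclProd v v := by
      intro v; rw [hQa v, ha]
    exact core_respects A L t hAeq hc hLe hQ

end Spacetimes
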